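/- Let x1, x0 be Bessel sequences in X and u0 a Bessel sequence in U with synthesis operators Ξ1, Ξ0 ∈ L(ℓ²(ℕ),X), Υ0 ∈ L(ℓ²(ℕ),U), and suppose the data-generation assumption holds for (A_s,B_s). Then Σ_is = {(A_s,B_s)} if and only if the range of the column operator H ∈ L(ℓ²(ℕ), X×U), Hw = (Ξ0 w, Υ0 w), is dense in X×U. -/

import Mathlib

noncomputable section

/-- `ℓ²(ℕ)`: the Hilbert space of square-summable complex sequences. -/
abbrev l2 : Type := lp (fun _ : ℕ => ℂ) 2

/-- `η` is a Bessel sequence in `Y`. -/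
def Bessel {Y : Type} [NormedAddCommGroup Y] [InnerProductSpace ℂ Y] (η : ℕ → Y) : Prop :=
  ∃ α : ℝ, 0 < α ∧ ∀ y : Y, ∑' k : ℕ, ‖(inner ℂ y (η k) : ℂ)‖ ^ 2 ≤ α * ‖y‖ ^ 2

/-- `T` is the synthesis operator associated with `η`: `T w = ∑ₖ wₖ • ηₖ`. -/
def IsSynthesis {Y : Type} [NormedAddCommGroup Y] [InnerProductSpace ℂ Y] (η : ℕ → Y)
    (T : l2 →L[ℂ] Y) : Prop :=
  ∀ w : l2, HasSum (fun k : ℕ => w k • η k) (T w)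

lemma synthesis_single {Y : Type} [NormedAddCommGroup Y] [InnerProductSpace ℂ Y] (η : ℕ → Y)
    (T : l2 →L[ℂ] Y) (hT : IsSynthesis η T) (k : ℕ) :
    T ((lp.single 2 k (1:ℂ) : l2)) = η k := by
  have h := hT ((lp.single 2 k (1:ℂ) : l2))
  have h2 : (fun j : ℕ => ((lp.single 2 k (1:ℂ) : l2)) j • η j)
      = fun j => if j = k then η k else 0 := by
    funext j
    rw [lp.single_apply]
    by_cases hj : j = k
    · subst hj; simp [Pi.single_apply]
    · simp [Pi.single_apply, hj]
  rw [h2] at h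
  exact h.unique (hasSum_ite_eq k (η k))

theorem stmt_1
    {X : Type} [NormedAddCommGroup X] [InnerProductSpace ℂ X] [CompleteSpace X] [Nontrivial X]
    {U : Type} [NormedAddCommGroup U] [InnerProductSpace ℂ U] [CompleteSpace U] [Nontrivial U]
    (x1 x0 : ℕ → X) (u0 : ℕ → U)
    (hx1B : Bessel x1) (hx0B : Bessel x0) (hu0B : Bessel u0)
    (Ξ1 Ξ0 : l2 →L[ℂ] X) (Υ0 : l2 →L[ℂ] U)
    (hΞ1 : IsSynthesis x1 Ξ1) (hΞ0 : IsSynthesis x0 Ξ0) (hΥ0 : IsSynthesis u0 Υ0)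
    (As : X →L[ℂ] X) (Bs : U →L[ℂ] X)
    (hgen : ∀ k : ℕ, x1 k = As (x0 k) + Bs (u0 k)) :
    ({p : (X →L[ℂ] X) × (U →L[ℂ] X) | ∀ k : ℕ, x1 k = p.1 (x0 k) + p.2 (u0 k)} = {(As, Bs)})
      ↔ DenseRange (fun w : l2 => ((Ξ0 w, Υ0 w) : X × U)) := by
  constructor
  · -- identifiability → dense range
    intro hset
    -- work in the Hilbert space `WithLp 2 (X × U)`
    set e : WithLp 2 (X × U) ≃L[ℂ] X × U := WithLp.prodContinuousLinearEquiv 2 ℂ X U with he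
    set H2 : l2 →L[ℂ] WithLp 2 (X × U) :=
      (e.symm : (X × U) →L[ℂ] WithLp 2 (X × U)).comp (Ξ0.prod Υ0) with hH2
    by_contra hdense
    have hdense2 : ¬ DenseRange H2 := by
      intro hd
      have : DenseRange ((e : WithLp 2 (X × U) → X × U) ∘ H2) :=
        (e.surjective.denseRange).comp hd e.continuous
      have hcomp : ((e : WithLp 2 (X × U) → X × U) ∘ H2)
          = fun w : l2 => ((Ξ0 w, Υ0 w) : X × U) := by
        funext w
        simp [hH2]
      rw [hcomp] at this
      exact hdense this
    set K : Submodule ℂ (WithLp 2 (X × U)) := LinearMap.range (H2 : l2 →ₗ[ℂ] WithLp 2 (X × U))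
      with hK
    have hKtc : K.topologicalClosure ≠ ⊤ := by
      intro htop
      apply hdense2
      have hcl : closure (K : Set (WithLp 2 (X × U))) = Set.univ := by
        rw [← Submodule.topologicalClosure_coe, htop]; rfl
      have hdK : Dense (K : Set (WithLp 2 (X × U))) := dense_iff_closure_eq.2 hcl
      have hrange : (K : Set (WithLp 2 (X × U))) = Set.range H2 := LinearMap.coe_range _
      rw [hrange] at hdK
      exact hdK
    have hbot : Kᗮ ≠ ⊥ := fun h => hKtc (Submodule.topologicalClosure_eq_top_iff.2 h)
    obtain ⟨v, hvK, hv0⟩ := Submodule.exists_mem_ne_zero_of_ne_bot hbot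
    set a : X := v.fst with ha
    set b : U := v.snd with hb
    -- orthogonality relation at each k
    have horth : ∀ k : ℕ, (inner ℂ a (x0 k) : ℂ) + inner ℂ b (u0 k) = 0 := by
      intro k
      have hmem : H2 ((lp.single 2 k (1:ℂ) : l2)) ∈ K := ⟨_, rfl⟩
      have h0 : (inner ℂ (H2 ((lp.single 2 k (1:ℂ) : l2))) v : ℂ) = 0 :=
        (Submodule.mem_orthogonal K v).1 hvK _ hmem
      have happ : H2 ((lp.single 2 k (1:ℂ) : l2))
          = (WithLp.equiv 2 (X × U)).symm (x0 k, u0 k) := by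
        simp [hH2, synthesis_single x0 Ξ0 hΞ0 k, synthesis_single u0 Υ0 hΥ0 k]
        rfl
      rw [happ, WithLp.prod_inner_apply] at h0
      have h0' : (inner ℂ (x0 k) a : ℂ) + inner ℂ (u0 k) b = 0 := h0
      have := congrArg (starRingEnd ℂ) h0'
      simpa [inner_conj_symm] using this
    -- build a different pair of operators
    obtain ⟨y, hy⟩ := exists_ne (0 : X)
    set C : X →L[ℂ] X := (innerSL ℂ a).smulRight y with hC
    set D : U →L[ℂ] X := (innerSL ℂ b).smulRight y with hD
    have hmem' : ((As + C, Bs + D) : (X →L[ℂ] X) × (U →L[ℂ] X)) ∈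
        {p : (X →L[ℂ] X) × (U →L[ℂ] X) | ∀ k : ℕ, x1 k = p.1 (x0 k) + p.2 (u0 k)} := by
      intro k
      have : C (x0 k) + D (u0 k) = 0 := by
        simp only [hC, hD, ContinuousLinearMap.smulRight_apply, innerSL_apply_apply]
        rw [← add_smul, horth k, zero_smul]
      simp only [ContinuousLinearMap.add_apply]
      rw [hgen k]
      have h2 : As (x0 k) + C (x0 k) + (Bs (u0 k) + D (u0 k))
          = As (x0 k) + Bs (u0 k) + (C (x0 k) + D (u0 k)) := by abel
      rw [h2, this, add_zero]
    rw [hset] at hmem'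
    have heq : ((As + C, Bs + D) : (X →L[ℂ] X) × (U →L[ℂ] X)) = (As, Bs) := hmem'
    have hCzero : C = 0 := by
      have := congrArg Prod.fst heq
      simpa using congrArg (fun T => T - As) this
    have hDzero : D = 0 := by
      have := congrArg Prod.snd heq
      simpa using congrArg (fun T => T - Bs) this
    -- v ≠ 0 yields a contradiction
    have hab : a ≠ 0 ∨ b ≠ 0 := by
      by_contra h
      push_neg at h
      apply hv0
      have : v = WithLp.toLp 2 ((a, b) : X × U) := rfl
      rw [h.1, h.2] at this
      exact this
    rcases hab with hax | hbx
    · have : C a = 0 := by rw [hCzero]; rfl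
      rw [hC] at this
      simp only [ContinuousLinearMap.smulRight_apply, innerSL_apply_apply] at this
      rcases smul_eq_zero.1 this with h | h
      · exact hax (inner_self_eq_zero.1 h)
      · exact hy h
    · have : D b = 0 := by rw [hDzero]; rfl
      rw [hD] at this
      simp only [ContinuousLinearMap.smulRight_apply, innerSL_apply_apply] at this
      rcases smul_eq_zero.1 this with h | h
      · exact hbx (inner_self_eq_zero.1 h)
      · exact hy h
  · -- dense range → identifiability
    intro hdense
    ext ⟨A, B⟩
    simp only [Set.mem_setOf_eq, Set.mem_singleton_iff, Prod.mk.injEq]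
    constructor
    · intro hAB
      set L : (X × U) →L[ℂ] X :=
        (A - As).comp (ContinuousLinearMap.fst ℂ X U)
          + (B - Bs).comp (ContinuousLinearMap.snd ℂ X U) with hL
      have hLzero : ∀ z : X × U, L z = 0 := by
        have hon : ∀ w : l2, L (Ξ0 w, Υ0 w) = 0 := by
          intro w
          have h1 : HasSum (fun k : ℕ => (A - As) (w k • x0 k)) ((A - As) (Ξ0 w)) :=
            (A - As).hasSum (hΞ0 w)
          have h2 : HasSum (fun k : ℕ => (B - Bs) (w k • u0 k)) ((B - Bs) (Υ0 w)) :=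
            (B - Bs).hasSum (hΥ0 w)
          have h3 := h1.add h2
          have hfun : (fun k : ℕ => (A - As) (w k • x0 k) + (B - Bs) (w k • u0 k))
              = fun _ : ℕ => (0 : X) := by
            funext k
            have e1 : A (x0 k) + B (u0 k) = As (x0 k) + Bs (u0 k) := by
              rw [← hAB k, ← hgen k]
            simp only [ContinuousLinearMap.sub_apply, map_smul, ← smul_add]
            rw [show A (x0 k) - As (x0 k) + (B (u0 k) - Bs (u0 k))
                = A (x0 k) + B (u0 k) - (As (x0 k) + Bs (u0 k)) by abel, e1]
            simp
          rw [hfun] at h3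
          have h4 : (A - As) (Ξ0 w) + (B - Bs) (Υ0 w) = 0 := h3.unique hasSum_zero
          simpa [hL] using h4
        have heqon : Set.EqOn (⇑L) (fun _ => (0 : X))
            (Set.range fun w : l2 => ((Ξ0 w, Υ0 w) : X × U)) := by
          rintro z ⟨w, rfl⟩
          exact hon w
        have hLz := Continuous.ext_on hdense L.continuous continuous_const heqon
        intro z
        exact congrFun hLz z
      constructor
      · ext x
        have := hLzero (x, 0)
        simpa [hL, sub_eq_zero] using this
      · ext u
        have := hLzero (0, u)
        simpa [hL, sub_eq_zero] using this
    · rintro ⟨rfl, rfl⟩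
      exact hgen
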